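/- For any norm X on ℝ², the generalized pi-value satisfies ϖ(X) ≤ 4, where ϖ(X) is half the length of the unit circle of X measured in X itself. -/

import Mathlib

open Set

noncomputable section

/-- `N` is a norm on the real vector space `E`. -/
structure IsNorm {E : Type*} [AddCommGroup E] [Module ℝ E] (N : E → ℝ) : Prop where
  eq_zero_iff : ∀ v : E, N v = 0 ↔ v = 0
  smul_eq : ∀ (c : ℝ) (v : E), N (c • v) = |c| * N v
  add_le : ∀ u v : E, N (u + v) ≤ N u + N v

/-- Length of the path `φ` on `[a, b]`, with respect to the (norm) function `N`:
the supremum over partitions `a = t 0 ≤ ⋯ ≤ t n = b` of the sums of distances. -/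
noncomputable def pathLen {E : Type*} [AddCommGroup E] [Module ℝ E] (N : E → ℝ)
    (φ : ℝ → E) (a b : ℝ) : ENNReal :=
  ⨆ (n : ℕ) (t : Fin (n + 1) → ℝ) (_ : Monotone t) (_ : t 0 = a)
    (_ : t (Fin.last n) = b),
    ∑ i : Fin n, ENNReal.ofReal (N (φ (t i.succ) - φ (t i.castSucc)))

/-- `φ` is a parametrization of the boundary loop of `B ⊆ ℝ² = ℂ`. -/
def IsBoundaryParam (B : Set ℂ) (φ : ℝ → ℂ) : Prop :=
  Continuous φ ∧ (∀ t : ℝ, φ (t + 1) = φ t) ∧ Set.InjOn φ (Set.Ico 0 1) ∧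
    φ '' Set.Ico 0 1 = frontier B

/-- A convex body in the plane: compact, convex, with nonempty interior. -/
def IsConvexBody (B : Set ℂ) : Prop :=
  IsCompact B ∧ Convex ℝ B ∧ (interior B).Nonempty

/-- `C` is a convex arc from `u` to `v`: either the segment `[u, v]`, or a set whose
union with the segment `[v, u]` is the boundary of a convex body (meeting the
segment only at the endpoints). -/
def IsConvexArc (C : Set ℂ) (u v : ℂ) : Prop :=
  u ∈ C ∧ v ∈ C ∧
    (C = segment ℝ u v ∨
      ∃ B : Set ℂ, IsConvexBody B ∧ C ∪ segment ℝ v u = frontier B ∧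
        C ∩ segment ℝ v u = {u, v})

/-- `φ` is a convex path from `u` to `v`, parametrized on `[0, 1]`. -/
def IsConvexPath (φ : ℝ → ℂ) (u v : ℂ) : Prop :=
  Continuous φ ∧ φ 0 = u ∧ φ 1 = v ∧ Set.InjOn φ (Set.Icc 0 1) ∧
    IsConvexArc (φ '' Set.Icc 0 1) u v

namespace Aux12
open MeasureTheory

variable {N : ℂ → ℝ}

lemma norm_zero (hN : IsNorm N) : N 0 = 0 := (hN.eq_zero_iff 0).2 rfl

lemma norm_neg' (hN : IsNorm N) (v : ℂ) : N (-v) = N v := by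
  have := hN.smul_eq (-1) v; simpa using this

lemma norm_nonneg' (hN : IsNorm N) (v : ℂ) : 0 ≤ N v := by
  have h := hN.add_le v (-v)
  rw [add_neg_cancel, norm_zero hN, norm_neg' hN] at h; linarith

lemma norm_pos (hN : IsNorm N) {v : ℂ} (hv : v ≠ 0) : 0 < N v :=
  lt_of_le_of_ne (norm_nonneg' hN v) (fun h => hv ((hN.eq_zero_iff v).1 h.symm))

lemma norm_sub_le' (hN : IsNorm N) (x y : ℂ) : N x - N y ≤ N (x - y) := by
  have := hN.add_le (x - y) y; simp at this; linarith

lemma norm_le_bound (hN : IsNorm N) (z : ℂ) :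
    N z ≤ (N 1 + N Complex.I) * ‖z‖ := by
  have hz : z = z.re • (1:ℂ) + z.im • Complex.I := by
    simp [Complex.real_smul, Complex.ext_iff]
  calc N z = N (z.re • (1:ℂ) + z.im • Complex.I) := by rw [← hz]
    _ ≤ N (z.re • (1:ℂ)) + N (z.im • Complex.I) := hN.add_le _ _
    _ = |z.re| * N 1 + |z.im| * N Complex.I := by rw [hN.smul_eq, hN.smul_eq]
    _ ≤ ‖z‖ * N 1 + ‖z‖ * N Complex.I := by
        have h1 := norm_nonneg' hN (1:ℂ)
        have h2 := norm_nonneg' hN Complex.I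
        have h3 := Complex.abs_re_le_norm z
        have h4 := Complex.abs_im_le_norm z
        have h5 : |z.re| ≥ 0 := abs_nonneg _
        have h6 : |z.im| ≥ 0 := abs_nonneg _
        nlinarith
    _ = (N 1 + N Complex.I) * ‖z‖ := by ring

lemma norm_continuous (hN : IsNorm N) : Continuous N := by
  rw [Metric.continuous_iff]
  intro z ε hε
  set C := N 1 + N Complex.I with hC
  have hC0 : 0 < C + 1 := by
    have := norm_nonneg' hN 1; have := norm_nonneg' hN Complex.I; positivity
  refine ⟨ε / (C + 1), by positivity, fun w hw => ?_⟩
  have h1 : N w - N z ≤ N (w - z) := norm_sub_le' hN w z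
  have h2 : N z - N w ≤ N (w - z) := by
    have := norm_sub_le' hN z w
    rw [show z - w = -(w - z) by ring, norm_neg' hN] at this; linarith
  have h3 : N (w - z) ≤ C * ‖w - z‖ := norm_le_bound hN _
  have h4 : ‖w - z‖ < ε / (C + 1) := by
    rwa [Complex.dist_eq] at hw
  have habs : 0 ≤ ‖w - z‖ := norm_nonneg _
  have hCn : 0 ≤ C := by have := norm_nonneg' hN 1; have := norm_nonneg' hN Complex.I; positivity
  have h5 : C * ‖w - z‖ < ε := by
    have : (C+1) * ‖w-z‖ < (C+1) * (ε / (C+1)) := by gcongr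
    have heq : (C+1) * (ε / (C+1)) = ε := by field_simp
    nlinarith
  rw [Real.dist_eq]
  exact abs_sub_lt_iff.2 ⟨by linarith, by linarith⟩


def det2 (z w : ℂ) : ℝ := z.re * w.im - z.im * w.re

lemma det2_smul_left (a : ℝ) (z w : ℂ) : det2 (a • z) w = a * det2 z w := by
  simp [det2, Complex.real_smul, Complex.mul_re, Complex.mul_im]
  ring

lemma det2_smul_right (a : ℝ) (z w : ℂ) : det2 z (a • w) = a * det2 z w := by
  simp [det2, Complex.real_smul, Complex.mul_re, Complex.mul_im]
  ring

lemma det2_add_left (x y w : ℂ) : det2 (x + y) w = det2 x w + det2 y w := by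
  simp [det2]; ring

lemma det2_add_right (x y w : ℂ) : det2 w (x + y) = det2 w x + det2 w y := by
  simp [det2]; ring

lemma cramer (u v z : ℂ) : det2 u v • z = det2 z v • u + det2 u z • v := by
  apply Complex.ext <;>
    simp [det2, Complex.real_smul, Complex.mul_re, Complex.mul_im] <;> ring


lemma no_three (Bs : Set ℂ) (hconv : Convex ℝ Bs) (hcl : IsClosed Bs)
    (f g : ℂ → ℝ) (u : ℂ)
    (hf : IsLinearMap ℝ f) (hg : IsLinearMap ℝ g)
    (hext : ∀ z w : ℂ, f z = f w → g z = g w → z = w)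
    (hfu : f u = 1) (hgu : g u = 0)
    (hu : ∀ c : ℝ, |c| < 1 → c • u ∈ interior Bs)
    (c : ℝ) (hc : |c| < 1)
    (p q r : ℂ) (hp : p ∈ frontier Bs) (hq : q ∈ frontier Bs) (hr : r ∈ frontier Bs)
    (hfp : f p = c) (hfq : f q = c) (hfr : f r = c) :
    p = q ∨ p = r ∨ q = r := by
  by_contra hcon
  push_neg at hcon
  obtain ⟨hpq, hpr, hqr⟩ := hcon
  have seg : ∀ m w y : ℂ, w ∈ interior Bs → y ∈ Bs → f m = c → f w = c → f y = c →
      g w < g m → g m < g y → m ∈ interior Bs := by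
    intro m w y hwi hy hfm hfw hfy h1 h2
    have hy0 : 0 < g y - g w := by linarith
    set s : ℝ := (g y - g m) / (g y - g w) with hs
    have hs0 : 0 < s := by apply div_pos <;> linarith
    have hs1 : s < 1 := by rw [div_lt_one hy0]; linarith
    have harith : s * g w + (1 - s) * g y = g m := by
      rw [hs]; field_simp; ring
    have hmem : m ∈ openSegment ℝ w y := by
      refine ⟨s, 1 - s, hs0, by linarith, by ring, ?_⟩
      apply (hext _ _ ?_ ?_).symm
      · rw [hf.map_add, hf.map_smul, hf.map_smul, smul_eq_mul, smul_eq_mul,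
          hfw, hfy, hfm]; ring
      · rw [hg.map_add, hg.map_smul, hg.map_smul, smul_eq_mul, smul_eq_mul]
        linarith
    exact hconv.openSegment_interior_closure_subset_interior hwi (subset_closure hy) hmem
  have seg' : ∀ m w y : ℂ, w ∈ interior Bs → y ∈ Bs → f m = c → f w = c → f y = c →
      g y < g m → g m < g w → m ∈ interior Bs := by
    intro m w y hwi hy hfm hfw hfy h1 h2
    have hy0 : 0 < g w - g y := by linarith
    set s : ℝ := (g m - g y) / (g w - g y) with hs
    have hs0 : 0 < s := by apply div_pos <;> linarith
    have hs1 : s < 1 := by rw [div_lt_one hy0]; linarith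
    have harith : s * g w + (1 - s) * g y = g m := by
      rw [hs]; field_simp; ring
    have hmem : m ∈ openSegment ℝ w y := by
      refine ⟨s, 1 - s, hs0, by linarith, by ring, ?_⟩
      apply (hext _ _ ?_ ?_).symm
      · rw [hf.map_add, hf.map_smul, hf.map_smul, smul_eq_mul, smul_eq_mul,
          hfw, hfy, hfm]; ring
      · rw [hg.map_add, hg.map_smul, hg.map_smul, smul_eq_mul, smul_eq_mul]
        linarith
    exact hconv.openSegment_interior_closure_subset_interior hwi (subset_closure hy) hmem
  have key : ∀ x y m : ℂ, x ∈ Bs → y ∈ Bs → m ∈ frontier Bs →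
      f x = c → f y = c → f m = c → g x < g m → g m < g y → False := by
    intro x y m hx hy hm hfx hfy hfm hxm hmy
    have hmni : m ∉ interior Bs := fun h => ((hcl.frontier_eq ▸ hm).2) h
    have hwi : c • u ∈ interior Bs := hu c hc
    have hfw : f (c • u) = c := by rw [hf.map_smul, smul_eq_mul, hfu]; ring
    have hgw : g (c • u) = 0 := by rw [hg.map_smul, smul_eq_mul, hgu]; ring
    generalize hgen : c • u = w at hwi hfw hgw
    rcases lt_trichotomy (g w) (g m) with h | h | h
    · exact hmni (seg m w y hwi hy hfm hfw hfy h hmy)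
    · have : m = w := hext _ _ (by rw [hfm, hfw]) h.symm
      exact hmni (this ▸ hwi)
    · exact hmni (seg' m w x hwi hx hfm hfw hfx hxm h)
  have hBp : p ∈ Bs := hcl.frontier_subset hp
  have hBq : q ∈ Bs := hcl.frontier_subset hq
  have hBr : r ∈ Bs := hcl.frontier_subset hr
  have gpq : g p ≠ g q := fun h => hpq (hext _ _ (hfp.trans hfq.symm) h)
  have gpr : g p ≠ g r := fun h => hpr (hext _ _ (hfp.trans hfr.symm) h)
  have gqr : g q ≠ g r := fun h => hqr (hext _ _ (hfq.trans hfr.symm) h)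
  rcases gpq.lt_or_gt with h1 | h1
  · rcases gqr.lt_or_gt with h2 | h2
    · exact key p r q hBp hBr hq hfp hfr hfq h1 h2
    · rcases gpr.lt_or_gt with h3 | h3
      · exact key p q r hBp hBq hr hfp hfq hfr h3 h2
      · exact key r q p hBr hBq hp hfr hfq hfp h3 h1
  · rcases gpr.lt_or_gt with h3 | h3
    · exact key q r p hBq hBr hp hfq hfr hfp h1 h3
    · rcases gqr.lt_or_gt with h2 | h2
      · exact key q p r hBq hBp hr hfq hfp hfr h2 h3
      · exact key r p q hBr hBp hq hfr hfp hfq h2 h1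

lemma var_le_four (ψ : ℝ → ℝ) (hψ : Continuous ψ)
    (hbd : ∀ s ∈ Icc (0:ℝ) 1, |ψ s| ≤ 1)
    (hlevel : ∀ c : ℝ, |c| < 1 → ∀ s₁ ∈ Ioo (0:ℝ) 1, ∀ s₂ ∈ Ioo (0:ℝ) 1,
      ∀ s₃ ∈ Ioo (0:ℝ) 1, ψ s₁ = c → ψ s₂ = c → ψ s₃ = c →
      s₁ = s₂ ∨ s₁ = s₃ ∨ s₂ = s₃)
    (n : ℕ) (t : Fin (n+1) → ℝ) (ht : Monotone t) (ht0 : t 0 = 0)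
    (ht1 : t (Fin.last n) = 1) :
    ∑ i : Fin n, ENNReal.ofReal |ψ (t i.succ) - ψ (t i.castSucc)| ≤ 4 := by
  classical
  set l : Fin n → ℝ := fun i => min (ψ (t i.castSucc)) (ψ (t i.succ)) with hl
  set r : Fin n → ℝ := fun i => max (ψ (t i.castSucc)) (ψ (t i.succ)) with hr
  have htmem : ∀ i : Fin (n+1), t i ∈ Icc (0:ℝ) 1 := by
    intro i
    exact ⟨ht0 ▸ ht (Fin.zero_le i), ht1 ▸ ht (Fin.le_last i)⟩
  have step1 : ∀ i : Fin n, ENNReal.ofReal |ψ (t i.succ) - ψ (t i.castSucc)|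
      = ∫⁻ c, (Ioo (l i) (r i)).indicator (fun _ => (1:ENNReal)) c := by
    intro i
    rw [lintegral_indicator measurableSet_Ioo, setLIntegral_const, one_mul,
      Real.volume_Ioo]
    congr 1
    rw [hl, hr]
    simp only []
    rw [max_sub_min_eq_abs]
  calc ∑ i : Fin n, ENNReal.ofReal |ψ (t i.succ) - ψ (t i.castSucc)|
      = ∑ i : Fin n, ∫⁻ c, (Ioo (l i) (r i)).indicator (fun _ => (1:ENNReal)) c :=
        Finset.sum_congr rfl fun i _ => step1 i
    _ = ∫⁻ c, ∑ i : Fin n, (Ioo (l i) (r i)).indicator (fun _ => (1:ENNReal)) c := by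
        rw [lintegral_finset_sum]
        intro i _
        exact (measurable_const.indicator measurableSet_Ioo)
    _ ≤ ∫⁻ c, (Ioo (-1:ℝ) 1).indicator (fun _ => (2:ENNReal)) c := by
        apply lintegral_mono_ae
        have hS : ∀ᵐ c : ℝ ∂volume, c ∉ Set.range (fun i : Fin (n+1) => ψ (t i)) :=
          Set.Countable.ae_notMem (Set.finite_range _).countable volume
        filter_upwards [hS] with c hc
        by_cases hex : ∃ i : Fin n, c ∈ Ioo (l i) (r i)
        · obtain ⟨i₀, hi₀⟩ := hex
          have hbnd : ∀ i : Fin n, c ∈ Ioo (l i) (r i) → c ∈ Ioo (-1:ℝ) 1 := by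
            intro i hi
            have b1 := hbd _ (htmem i.castSucc)
            have b2 := hbd _ (htmem i.succ)
            rw [abs_le] at b1 b2
            constructor
            · have : -1 ≤ l i := le_min b1.1 b2.1
              linarith [hi.1]
            · have : r i ≤ 1 := max_le b1.2 b2.2
              linarith [hi.2]
          have hcm : c ∈ Ioo (-1:ℝ) 1 := hbnd i₀ hi₀
          rw [Set.indicator_of_mem hcm]
          -- count crossings
          have cross : ∀ i : Fin n, c ∈ Ioo (l i) (r i) →
              ∃ s, s ∈ Ioo (t i.castSucc) (t i.succ) ∧ ψ s = c := by
            intro i hi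
            have hle : t i.castSucc ≤ t i.succ := ht (Fin.castSucc_lt_succ : i.castSucc < i.succ).le
            rcases le_total (ψ (t i.castSucc)) (ψ (t i.succ)) with hcase | hcase
            · have hmm : c ∈ Ioo (ψ (t i.castSucc)) (ψ (t i.succ)) := by
                have h1 := hi.1; have h2 := hi.2
                rw [hl] at h1; rw [hr] at h2
                simp only [min_eq_left hcase] at h1
                simp only [max_eq_right hcase] at h2
                exact ⟨h1, h2⟩
              obtain ⟨s, hs, hsc⟩ := intermediate_value_Ioo hle hψ.continuousOn hmm
              exact ⟨s, hs, hsc⟩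
            · have hmm : c ∈ Ioo (ψ (t i.succ)) (ψ (t i.castSucc)) := by
                have h1 := hi.1; have h2 := hi.2
                rw [hl] at h1; rw [hr] at h2
                simp only [min_eq_right hcase] at h1
                simp only [max_eq_left hcase] at h2
                exact ⟨h1, h2⟩
              obtain ⟨s, hs, hsc⟩ := intermediate_value_Ioo' hle hψ.continuousOn hmm
              exact ⟨s, hs, hsc⟩
          have hsum : ∑ i : Fin n, (Ioo (l i) (r i)).indicator (fun _ => (1:ENNReal)) c
              = ((Finset.univ.filter (fun i : Fin n => c ∈ Ioo (l i) (r i))).card : ENNReal) := by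
            rw [← Finset.sum_boole]
            apply Finset.sum_congr rfl
            intro i _
            by_cases h : c ∈ Ioo (l i) (r i) <;> simp [h]
          rw [hsum]
          have hcard : (Finset.univ.filter (fun i : Fin n => c ∈ Ioo (l i) (r i))).card ≤ 2 := by
            by_contra hgt
            push_neg at hgt
            obtain ⟨a, b, d, ha, hb, hd, hab, had, hbd'⟩ := Finset.two_lt_card_iff.1 hgt
            rw [Finset.mem_filter] at ha hb hd
            obtain ⟨sa, hsa, hsac⟩ := cross a ha.2
            obtain ⟨sb, hsb, hsbc⟩ := cross b hb.2
            obtain ⟨sd, hsd, hsdc⟩ := cross d hd.2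
            have hIoo : ∀ (i : Fin n) (s : ℝ), s ∈ Ioo (t i.castSucc) (t i.succ) →
                s ∈ Ioo (0:ℝ) 1 := by
              intro i s hs
              exact ⟨lt_of_le_of_lt (htmem i.castSucc).1 hs.1,
                lt_of_lt_of_le hs.2 (htmem i.succ).2⟩
            have hdist : ∀ (i j : Fin n) (si sj : ℝ), i ≠ j →
                si ∈ Ioo (t i.castSucc) (t i.succ) → sj ∈ Ioo (t j.castSucc) (t j.succ) →
                si ≠ sj := by
              intro i j si sj hij hsi hsj
              rcases hij.lt_or_gt with h | h
              · have hv : (i:ℕ) < (j:ℕ) := h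
                have : t i.succ ≤ t j.castSucc := ht (by
                  rw [Fin.le_def, Fin.val_succ, Fin.coe_castSucc]; omega)
                exact ne_of_lt (by linarith [hsi.2, hsj.1])
              · have hv : (j:ℕ) < (i:ℕ) := h
                have : t j.succ ≤ t i.castSucc := ht (by
                  rw [Fin.le_def, Fin.val_succ, Fin.coe_castSucc]; omega)
                exact ne_of_gt (by linarith [hsj.2, hsi.1])
            have habs : |c| < 1 := abs_lt.2 hcm
            rcases hlevel c habs sa (hIoo a sa hsa) sb (hIoo b sb hsb) sd (hIoo d sd hsd)
              hsac hsbc hsdc with h | h | h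
            · exact hdist a b sa sb hab hsa hsb h
            · exact hdist a d sa sd had hsa hsd h
            · exact hdist b d sb sd hbd' hsb hsd h
          exact_mod_cast Nat.cast_le.2 hcard |>.trans_eq (by norm_num)
        · push_neg at hex
          have : ∑ i : Fin n, (Ioo (l i) (r i)).indicator (fun _ => (1:ENNReal)) c = 0 :=
            Finset.sum_eq_zero fun i _ => Set.indicator_of_notMem (hex i) _
          rw [this]
          exact zero_le
    _ = 4 := by
        rw [lintegral_indicator measurableSet_Ioo, setLIntegral_const, Real.volume_Ioo]
        norm_num

end Aux12

open Aux12

/-- For any norm on the plane, the generalized pi-value is at most 4. -/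
theorem stmt12 (N : ℂ → ℝ) (hN : IsNorm N) (φ : ℝ → ℂ)
    (hφ : IsBoundaryParam {z : ℂ | N z ≤ 1} φ) :
    pathLen N φ 0 1 / 2 ≤ 4 := by
  obtain ⟨hφc, hφper, hφinj, hφim⟩ := hφ
  set B : Set ℂ := {z : ℂ | N z ≤ 1} with hBdef
  have hNc : Continuous N := norm_continuous hN
  have hBclosed : IsClosed B := isClosed_le hNc continuous_const
  have hBconv : Convex ℝ B := by
    intro x hx y hy a b ha hb hab
    have h1 := hN.add_le (a • x) (b • y)
    rw [hN.smul_eq, hN.smul_eq, abs_of_nonneg ha, abs_of_nonneg hb] at h1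
    have hx' : N x ≤ 1 := hx
    have hy' : N y ≤ 1 := hy
    have : N (a • x + b • y) ≤ 1 := by nlinarith
    exact this
  -- lower bound for N, compactness
  obtain ⟨w₀, hw₀s, hw₀min⟩ := (isCompact_sphere (0:ℂ) 1).exists_isMinOn
    ⟨1, by simp⟩ hNc.continuousOn
  have hw₀ : ‖w₀‖ = 1 := by
    have := mem_sphere_zero_iff_norm.1 hw₀s
    simpa using this
  have hm0 : 0 < N w₀ := norm_pos hN (by intro h; rw [h] at hw₀; simp at hw₀)
  have hlow : ∀ z : ℂ, N w₀ * ‖z‖ ≤ N z := by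
    intro z
    rcases eq_or_ne z 0 with rfl | hz
    · simp [norm_zero hN]
    · have habs : 0 < ‖z‖ := by
        simpa [norm_pos_iff] using hz
      have hunit : (‖z‖)⁻¹ • z ∈ Metric.sphere (0:ℂ) 1 := by
        simp [Complex.real_smul, map_mul, abs_of_pos,
          inv_mul_cancel₀ habs.ne']
      have h2 : N w₀ ≤ N ((‖z‖)⁻¹ • z) := hw₀min hunit
      have h3 : N ((‖z‖)⁻¹ • z) = (‖z‖)⁻¹ * N z := by
        rw [hN.smul_eq, abs_of_pos (by positivity)]
      rw [h3] at h2
      calc N w₀ * ‖z‖ ≤ ((‖z‖)⁻¹ * N z) * ‖z‖ := by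
            nlinarith
        _ = N z := by field_simp
  have hBcompact : IsCompact B := by
    rw [Metric.isCompact_iff_isClosed_bounded]
    refine ⟨hBclosed, ?_⟩
    apply Bornology.IsBounded.subset (Metric.isBounded_closedBall (x := (0:ℂ))
      (r := (N w₀)⁻¹))
    intro z hz
    have h1 : N z ≤ 1 := hz
    have h2 := hlow z
    simp only [Metric.mem_closedBall]
    rw [show dist z 0 = ‖z‖ by simp [Complex.dist_eq],
      show (N w₀)⁻¹ = 1 / N w₀ by ring, le_div_iff₀ hm0]
    nlinarith
  -- interior
  have hlt_int : {z : ℂ | N z < 1} ⊆ interior B :=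
    interior_maximal (fun z (hz : N z < 1) => show N z ≤ 1 from le_of_lt hz)
      (isOpen_lt hNc continuous_const)
  have hfront : ∀ z ∈ frontier B, N z = 1 := by
    intro z hz
    have h1 : z ∈ B := hBclosed.frontier_subset hz
    have h2 : z ∉ interior B := fun h => ((hBclosed.frontier_eq ▸ hz).2) h
    rcases lt_or_eq_of_le (show N z ≤ 1 from h1) with h | h
    · exact absurd (hlt_int h) h2
    · exact h
  -- Auerbach maximization
  have hDcont : Continuous (fun p : ℂ × ℂ => |det2 p.1 p.2|) := by
    unfold det2
    fun_prop
  obtain ⟨⟨u, v⟩, huv, hmax⟩ := (hBcompact.prod hBcompact).exists_isMaxOn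
    ⟨(0,0), Set.mem_prod.2 ⟨show N 0 ≤ 1 by rw [norm_zero hN]; norm_num,
      show N 0 ≤ 1 by rw [norm_zero hN]; norm_num⟩⟩ hDcont.continuousOn
  have hNu : N u ≤ 1 := (Set.mem_prod.1 huv).1
  have hNv : N v ≤ 1 := (Set.mem_prod.1 huv).2
  have hmax' : ∀ x y : ℂ, N x ≤ 1 → N y ≤ 1 → |det2 x y| ≤ |det2 u v| := by
    intro x y hx hy
    exact hmax (show (x, y) ∈ B ×ˢ B from Set.mem_prod.2 ⟨hx, hy⟩)
  set d : ℝ := det2 u v with hd_def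
  have hN1 : 0 < N 1 := norm_pos hN one_ne_zero
  have hNI : 0 < N Complex.I := norm_pos hN Complex.I_ne_zero
  have hd : d ≠ 0 := by
    have hx0 : N ((N 1)⁻¹ • (1:ℂ)) ≤ 1 := by
      rw [hN.smul_eq, abs_of_pos (by positivity)]
      rw [inv_mul_cancel₀ hN1.ne']
    have hy0 : N ((N Complex.I)⁻¹ • Complex.I) ≤ 1 := by
      rw [hN.smul_eq, abs_of_pos (by positivity)]
      rw [inv_mul_cancel₀ hNI.ne']
    have h1 := hmax' _ _ hx0 hy0
    rw [det2_smul_left, det2_smul_right] at h1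
    have h2 : det2 1 Complex.I = 1 := by simp [det2]
    rw [h2] at h1
    intro h
    rw [h, abs_zero, abs_of_pos (show (0:ℝ) < (N 1)⁻¹ * ((N Complex.I)⁻¹ * 1) by positivity)] at h1
    nlinarith [inv_pos.2 hN1, inv_pos.2 hNI]
  have hdpos : 0 < |d| := abs_pos.2 hd
  -- coordinates
  set f : ℂ → ℝ := fun z => det2 z v / d with hf_def
  set g : ℂ → ℝ := fun z => det2 u z / d with hg_def
  have hflin : IsLinearMap ℝ f := by
    constructor
    · intro x y; rw [hf_def]; simp only [det2_add_left]; ring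
    · intro a x; rw [hf_def]; simp only [det2_smul_left, smul_eq_mul]; ring
  have hglin : IsLinearMap ℝ g := by
    constructor
    · intro x y; rw [hg_def]; simp only [det2_add_right]; ring
    · intro a x; rw [hg_def]; simp only [det2_smul_right, smul_eq_mul]; ring
  have hrep : ∀ z : ℂ, z = f z • u + g z • v := by
    intro z
    have h1 := cramer u v z
    rw [hf_def, hg_def]
    simp only [div_eq_inv_mul, ← smul_eq_mul, smul_assoc]
    rw [← smul_add, ← h1, ← hd_def, inv_smul_smul₀]
    rwa [hd_def]
  have hext : ∀ z w : ℂ, f z = f w → g z = g w → z = w := by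
    intro z w h1 h2
    rw [hrep z, hrep w, h1, h2]
  have hfu : f u = 1 := by rw [hf_def]; exact div_self hd
  have hgv : g v = 1 := by rw [hg_def]; exact div_self hd
  have hfv : f v = 0 := by rw [hf_def]; simp [det2]; ring_nf; simp [mul_comm]
  have hgu : g u = 0 := by rw [hg_def]; simp [det2]; ring_nf; simp [mul_comm]
  -- |f| ≤ N, |g| ≤ N
  have hdet_le : ∀ z : ℂ, |det2 z v| ≤ N z * |d| := by
    intro z
    rcases eq_or_ne z 0 with rfl | hz
    · simp [det2, norm_zero hN]
    · have hNz : 0 < N z := norm_pos hN hz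
      have hmem : N ((N z)⁻¹ • z) ≤ 1 := by
        rw [hN.smul_eq, abs_of_pos (by positivity), inv_mul_cancel₀ hNz.ne']
      have h1 := hmax' _ _ hmem hNv
      rw [det2_smul_left, abs_mul, abs_of_pos (show (0:ℝ) < (N z)⁻¹ by positivity)] at h1
      calc |det2 z v| = N z * ((N z)⁻¹ * |det2 z v|) := by field_simp
        _ ≤ N z * |d| := by nlinarith
  have hdet_le' : ∀ z : ℂ, |det2 u z| ≤ N z * |d| := by
    intro z
    rcases eq_or_ne z 0 with rfl | hz
    · simp [det2, norm_zero hN]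
    · have hNz : 0 < N z := norm_pos hN hz
      have hmem : N ((N z)⁻¹ • z) ≤ 1 := by
        rw [hN.smul_eq, abs_of_pos (by positivity), inv_mul_cancel₀ hNz.ne']
      have h1 := hmax' _ _ hNu hmem
      rw [det2_smul_right, abs_mul, abs_of_pos (show (0:ℝ) < (N z)⁻¹ by positivity)] at h1
      calc |det2 u z| = N z * ((N z)⁻¹ * |det2 u z|) := by field_simp
        _ ≤ N z * |d| := by nlinarith
  have hfle : ∀ z : ℂ, |f z| ≤ N z := by
    intro z
    rw [hf_def]
    simp only [abs_div]
    rw [div_le_iff₀ hdpos]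
    exact hdet_le z
  have hgle : ∀ z : ℂ, |g z| ≤ N z := by
    intro z
    rw [hg_def]
    simp only [abs_div]
    rw [div_le_iff₀ hdpos]
    exact hdet_le' z
  -- interior points on the axes
  have hintu : ∀ c : ℝ, |c| < 1 → c • u ∈ interior B := by
    intro c hc
    apply hlt_int
    have : N (c • u) = |c| * N u := hN.smul_eq c u
    have h2 : |c| * N u ≤ |c| := by nlinarith [abs_nonneg c]
    simp only [Set.mem_setOf_eq]
    linarith
  have hintv : ∀ c : ℝ, |c| < 1 → c • v ∈ interior B := by
    intro c hc
    apply hlt_int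
    have : N (c • v) = |c| * N v := hN.smul_eq c v
    have h2 : |c| * N v ≤ |c| := by nlinarith [abs_nonneg c]
    simp only [Set.mem_setOf_eq]
    linarith
  -- boundary facts
  have hφfr : ∀ s ∈ Ico (0:ℝ) 1, φ s ∈ frontier B := by
    intro s hs
    rw [← hφim]
    exact Set.mem_image_of_mem φ hs
  have hφone : ∀ s ∈ Icc (0:ℝ) 1, N (φ s) = 1 := by
    intro s hs
    rcases lt_or_eq_of_le hs.2 with h | h
    · exact hfront _ (hφfr s ⟨hs.1, h⟩)
    · subst h
      have : φ 1 = φ 0 := by simpa using hφper 0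
      rw [this]
      exact hfront _ (hφfr 0 ⟨le_refl _, one_pos⟩)
  -- difference bound
  have hdiff : ∀ x y : ℂ, N (x - y) ≤ |f x - f y| + |g x - g y| := by
    intro x y
    have hxy : x - y = (f x - f y) • u + (g x - g y) • v := by
      rw [sub_smul, sub_smul]
      nth_rewrite 1 [hrep x]
      nth_rewrite 1 [hrep y]
      abel
    calc N (x - y) = N ((f x - f y) • u + (g x - g y) • v) := by rw [← hxy]
      _ ≤ N ((f x - f y) • u) + N ((g x - g y) • v) := hN.add_le _ _
      _ = |f x - f y| * N u + |g x - g y| * N v := by rw [hN.smul_eq, hN.smul_eq]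
      _ ≤ |f x - f y| + |g x - g y| := by
          nlinarith [abs_nonneg (f x - f y), abs_nonneg (g x - g y),
            norm_nonneg' hN u, norm_nonneg' hN v]
  -- level-set property for f ∘ φ
  have hlevf : ∀ c : ℝ, |c| < 1 → ∀ s₁ ∈ Ioo (0:ℝ) 1, ∀ s₂ ∈ Ioo (0:ℝ) 1,
      ∀ s₃ ∈ Ioo (0:ℝ) 1, f (φ s₁) = c → f (φ s₂) = c → f (φ s₃) = c →
      s₁ = s₂ ∨ s₁ = s₃ ∨ s₂ = s₃ := by
    intro c hc s₁ hs₁ s₂ hs₂ s₃ hs₃ h1 h2 h3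
    have m₁ : s₁ ∈ Ico (0:ℝ) 1 := ⟨hs₁.1.le, hs₁.2⟩
    have m₂ : s₂ ∈ Ico (0:ℝ) 1 := ⟨hs₂.1.le, hs₂.2⟩
    have m₃ : s₃ ∈ Ico (0:ℝ) 1 := ⟨hs₃.1.le, hs₃.2⟩
    rcases no_three B hBconv hBclosed f g u hflin hglin hext hfu hgu hintu c hc
      (φ s₁) (φ s₂) (φ s₃) (hφfr _ m₁) (hφfr _ m₂) (hφfr _ m₃) h1 h2 h3 with h | h | h
    · exact Or.inl (hφinj m₁ m₂ h)
    · exact Or.inr (Or.inl (hφinj m₁ m₃ h))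
    · exact Or.inr (Or.inr (hφinj m₂ m₃ h))
  have hlevg : ∀ c : ℝ, |c| < 1 → ∀ s₁ ∈ Ioo (0:ℝ) 1, ∀ s₂ ∈ Ioo (0:ℝ) 1,
      ∀ s₃ ∈ Ioo (0:ℝ) 1, g (φ s₁) = c → g (φ s₂) = c → g (φ s₃) = c →
      s₁ = s₂ ∨ s₁ = s₃ ∨ s₂ = s₃ := by
    intro c hc s₁ hs₁ s₂ hs₂ s₃ hs₃ h1 h2 h3
    have m₁ : s₁ ∈ Ico (0:ℝ) 1 := ⟨hs₁.1.le, hs₁.2⟩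
    have m₂ : s₂ ∈ Ico (0:ℝ) 1 := ⟨hs₂.1.le, hs₂.2⟩
    have m₃ : s₃ ∈ Ico (0:ℝ) 1 := ⟨hs₃.1.le, hs₃.2⟩
    rcases no_three B hBconv hBclosed g f v hglin hflin
      (fun z w h1' h2' => hext z w h2' h1') hgv hfv hintv c hc
      (φ s₁) (φ s₂) (φ s₃) (hφfr _ m₁) (hφfr _ m₂) (hφfr _ m₃) h1 h2 h3 with h | h | h
    · exact Or.inl (hφinj m₁ m₂ h)
    · exact Or.inr (Or.inl (hφinj m₁ m₃ h))
    · exact Or.inr (Or.inr (hφinj m₂ m₃ h))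
  -- continuity
  have hfc : Continuous f := by
    rw [hf_def]; unfold det2; fun_prop
  have hgc : Continuous g := by
    rw [hg_def]; unfold det2; fun_prop
  -- main bound
  have hbound : pathLen N φ 0 1 ≤ 8 := by
    rw [pathLen]
    refine iSup_le fun n => iSup_le fun t => iSup_le fun ht => iSup_le fun ht0 =>
      iSup_le fun ht1 => ?_
    have hedge : ∀ i : Fin n,
        ENNReal.ofReal (N (φ (t i.succ) - φ (t i.castSucc))) ≤
        ENNReal.ofReal |f (φ (t i.succ)) - f (φ (t i.castSucc))| +
        ENNReal.ofReal |g (φ (t i.succ)) - g (φ (t i.castSucc))| := by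
      intro i
      rw [← ENNReal.ofReal_add (abs_nonneg _) (abs_nonneg _)]
      exact ENNReal.ofReal_le_ofReal (hdiff _ _)
    calc ∑ i : Fin n, ENNReal.ofReal (N (φ (t i.succ) - φ (t i.castSucc)))
        ≤ ∑ i : Fin n, (ENNReal.ofReal |f (φ (t i.succ)) - f (φ (t i.castSucc))| +
          ENNReal.ofReal |g (φ (t i.succ)) - g (φ (t i.castSucc))|) :=
          Finset.sum_le_sum fun i _ => hedge i
      _ = (∑ i : Fin n, ENNReal.ofReal |f (φ (t i.succ)) - f (φ (t i.castSucc))|) +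
          (∑ i : Fin n, ENNReal.ofReal |g (φ (t i.succ)) - g (φ (t i.castSucc))|) :=
          Finset.sum_add_distrib
      _ ≤ 4 + 4 := by
          apply add_le_add
          · exact var_le_four (fun s => f (φ s)) (hfc.comp hφc)
              (fun s hs => (hfle (φ s)).trans_eq (hφone s hs)) hlevf n t ht ht0 ht1
          · exact var_le_four (fun s => g (φ s)) (hgc.comp hφc)
              (fun s hs => (hgle (φ s)).trans_eq (hφone s hs)) hlevg n t ht ht0 ht1
      _ = 8 := by norm_num
  have h8 : pathLen N φ 0 1 ≤ 4 * 2 := by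
    rw [show (4:ENNReal) * 2 = 8 by norm_num]
    exact hbound
  exact ENNReal.div_le_of_le_mul h8


end
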